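/- Let M₀ : ℝ → ℂ be differentiable, h : ℝ → ℝ a function, and define M : ℝ³ → ℂ by M(u,x,y) = M₀(u) and H : ℝ³ → ℝ by H(u,x,y) = x·Re(M₀′(u)) + y·Im(M₀′(u)) + h(u). Then the following six expressions vanish identically on ℝ³: ∂_x(Re M) − i·∂_y(Im M); ∂_x(Im M) − i·∂_y(Re M); ∂_x(Re M) + i·∂_y(Im M); ∂_x(Im M) + i·∂_y(Re M); ∂_x M̄ − i·∂_y M̄; and M̄·(∂_x M̄ + i·∂_y M̄) + M·(∂_x M̄ − i·∂_y M̄) − ∂_u M̄ + ∂_xH − i·∂_yH (where M̄ denotes the complex conjugate of M). -/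

import Mathlib

open Complex

/-- Verification: for M = M₀(u) and H = x·Re M₀′ + y·Im M₀′ + h(u), all the torsion
components of the teleparallel pp-wave proper coframe vanish identically. -/
theorem teleparallel_ppwave_torsion_vanishes
    (M₀ : ℝ → ℂ) (hM₀ : Differentiable ℝ M₀) (h : ℝ → ℝ)
    (M : ℝ → ℝ → ℝ → ℂ) (H : ℝ → ℝ → ℝ → ℝ)
    (hM : ∀ u x y : ℝ, M u x y = M₀ u)
    (hH : ∀ u x y : ℝ,
      H u x y = x * (deriv M₀ u).re + y * (deriv M₀ u).im + h u) :
    ∀ u x y : ℝ,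
      (deriv (fun x' => (M u x' y).re) x : ℂ)
        - Complex.I * (deriv (fun y' => (M u x y').im) y : ℂ) = 0 ∧
      (deriv (fun x' => (M u x' y).im) x : ℂ)
        - Complex.I * (deriv (fun y' => (M u x y').re) y : ℂ) = 0 ∧
      (deriv (fun x' => (M u x' y).re) x : ℂ)
        + Complex.I * (deriv (fun y' => (M u x y').im) y : ℂ) = 0 ∧
      (deriv (fun x' => (M u x' y).im) x : ℂ)
        + Complex.I * (deriv (fun y' => (M u x y').re) y : ℂ) = 0 ∧
      deriv (fun x' => (starRingEnd ℂ) (M u x' y)) x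
        - Complex.I * deriv (fun y' => (starRingEnd ℂ) (M u x y')) y = 0 ∧
      (starRingEnd ℂ) (M u x y)
          * (deriv (fun x' => (starRingEnd ℂ) (M u x' y)) x
            + Complex.I * deriv (fun y' => (starRingEnd ℂ) (M u x y')) y)
        + M u x y
          * (deriv (fun x' => (starRingEnd ℂ) (M u x' y)) x
            - Complex.I * deriv (fun y' => (starRingEnd ℂ) (M u x y')) y)
        - deriv (fun u' => (starRingEnd ℂ) (M u' x y)) u
        + (deriv (fun x' => H u x' y) x : ℂ)
        - Complex.I * (deriv (fun y' => H u x y') y : ℂ) = 0 := by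
  intro u x y
  set a := (deriv M₀ u).re
  set b := (deriv M₀ u).im
  have hdu : deriv (fun u' => (starRingEnd ℂ) (M u' x y)) u
      = (starRingEnd ℂ) (deriv M₀ u) := by
    simp only [hM]
    exact ((hM₀ u).hasDerivAt.star).deriv
  have hdx : deriv (fun x' : ℝ => ((H u x' y : ℝ) : ℂ)) x = (a : ℂ) := by
    have heq : (fun x' : ℝ => ((H u x' y : ℝ) : ℂ))
        = fun x' : ℝ => (x' : ℂ) * (a : ℂ) + ((y * b + h u : ℝ) : ℂ) := by
      funext x'; rw [hH]; push_cast; ring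
    rw [heq]
    simpa using ((Complex.ofRealCLM.hasDerivAt.mul_const (a : ℂ)).add_const
      ((y * b + h u : ℝ) : ℂ)).deriv
  have hdy : deriv (fun y' : ℝ => ((H u x y' : ℝ) : ℂ)) y = (b : ℂ) := by
    have heq : (fun y' : ℝ => ((H u x y' : ℝ) : ℂ))
        = fun y' : ℝ => (y' : ℂ) * (b : ℂ) + ((x * a + h u : ℝ) : ℂ) := by
      funext y'; rw [hH]; push_cast; ring
    rw [heq]
    simpa using ((Complex.ofRealCLM.hasDerivAt.mul_const (b : ℂ)).add_const
      ((x * a + h u : ℝ) : ℂ)).deriv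
  refine ⟨?_, ?_, ?_, ?_, ?_, ?_⟩
  · simp only [hM]; simp
  · simp only [hM]; simp
  · simp only [hM]; simp
  · simp only [hM]; simp
  · simp only [hM]; simp
  · rw [hdu, hdx, hdy]
    simp only [hM, deriv_const']
    simp [Complex.ext_iff, a, b]
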